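/- Integral representation: B_{n,r} = \frac{2 n!}{\pi e} \mathrm{Im} \int_0^\pi \exp(e^{e^{i\theta}}) e^{r e^{i\theta}} \sin(n\theta)\, d\theta. -/

import Mathlib

/-- `rS r n k` is the r-Stirling number of the second kind `S_r(n+r, k+r)`. -/
def rS (r : ℕ) : ℕ → ℕ → ℕ
  | 0, 0 => 1
  | 0, _ + 1 => 0
  | n + 1, 0 => r * rS r n 0
  | n + 1, k + 1 => (k + 1 + r) * rS r n (k + 1) + rS r n k

/-- The r-Stirling number of the second kind `S_r(n,k)`. -/
def rStirling (r n k : ℕ) : ℕ :=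
  if r ≤ n ∧ r ≤ k then rS r (n - r) (k - r) else 0

/-- The r-Bell polynomial `B_{n,r}(x)` as a real function. -/
def rBellPoly (r n : ℕ) (x : ℝ) : ℝ :=
  ∑ k ∈ Finset.range (n + 1), (rS r n k : ℝ) * x ^ k

/-- The r-Bell number `B_{n,r}`. -/
def rBell (r n : ℕ) : ℕ :=
  ∑ k ∈ Finset.range (n + 1), rS r n k

open MeasureTheory Real intervalIntegral
open Complex (I)


lemma rS_eq_zero (r : ℕ) : ∀ n k, n < k → rS r n k = 0 := by
  intro n
  induction n with
  | zero => intro k hk; cases k with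
    | zero => omega
    | succ k => rfl
  | succ n ih =>
    intro k hk
    cases k with
    | zero => omega
    | succ k =>
      rw [rS, ih (k+1) (by omega), ih k (by omega)]; ring

lemma rS_poly (r : ℕ) : ∀ n, ∀ x : ℝ,
    (x + r) ^ n = ∑ k ∈ Finset.range (n + 1),
      (rS r n k : ℝ) * ∏ i ∈ Finset.range k, (x - i) := by
  intro n
  induction n with
  | zero => intro x; simp [rS]
  | succ n ih =>
    intro x
    set P : ℕ → ℝ := fun k => ∏ i ∈ Finset.range k, (x - i) with hP
    have h1 : (x + r) ^ (n+1) = (x + r) * (x + r) ^ n := by ring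
    rw [h1, ih x, Finset.mul_sum]
    have key : ∀ k, (x + (r:ℝ)) * ((rS r n k : ℝ) * P k)
        = (rS r n k : ℝ) * P (k+1) + ((k:ℝ) + r) * ((rS r n k : ℝ) * P k) := by
      intro k
      rw [hP]
      simp only [Finset.prod_range_succ]
      ring
    rw [Finset.sum_congr rfl (fun k _ => key k), Finset.sum_add_distrib]
    have hR : ∑ k ∈ Finset.range (n+1+1), (rS r (n+1) k : ℝ) * P k
        = (∑ k ∈ Finset.range (n+1), ((k:ℝ)+1+r) * (rS r n (k+1) : ℝ) * P (k+1))
          + ((r:ℝ) * (rS r n 0 : ℝ)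
          + ∑ k ∈ Finset.range (n+1), (rS r n k : ℝ) * P (k+1)) := by
      rw [Finset.sum_range_succ' (fun k => (rS r (n+1) k : ℝ) * P k) (n+1)]
      have h0 : P 0 = 1 := by simp [hP]
      simp only [rS, h0, mul_one, Nat.cast_add, Nat.cast_mul, Nat.cast_one]
      simp only [add_mul]
      rw [Finset.sum_add_distrib]
      ring
    rw [hR]
    have hB : ∑ k ∈ Finset.range (n+1), ((k:ℝ) + r) * ((rS r n k : ℝ) * P k)
        = (∑ k ∈ Finset.range (n+1), ((k:ℝ)+1+r) * (rS r n (k+1) : ℝ) * P (k+1))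
          + (r:ℝ) * (rS r n 0 : ℝ) := by
      rw [Finset.sum_range_succ' (fun k => ((k:ℝ) + r) * ((rS r n k : ℝ) * P k)) n]
      have h0 : P 0 = 1 := by simp [hP]
      rw [Finset.sum_range_succ (fun k => ((k:ℝ)+1+r) * (rS r n (k+1) : ℝ) * P (k+1)) n]
      rw [rS_eq_zero r n (n+1) (by omega)]
      simp only [h0, Nat.cast_zero, Nat.cast_add, Nat.cast_one, mul_one, zero_add,
        mul_assoc, mul_zero, zero_mul, add_zero]
    rw [hB]
    ring

/-- the "falling product over factorial" function -/
noncomputable def gk (k m : ℕ) : ℝ := (∏ i ∈ Finset.range k, ((m:ℝ) - i)) / m.factorial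

lemma gk_shift (k j : ℕ) : gk k (j + k) = 1 / j.factorial := by
  unfold gk
  have h1 : ∏ i ∈ Finset.range k, (((j + k : ℕ):ℝ) - i)
      = ((j + k).descFactorial k : ℝ) := by
    rw [Nat.descFactorial_eq_prod_range, Nat.cast_prod]
    refine Finset.prod_congr rfl fun i hi => ?_
    have : i ≤ j + k := by
      have := Finset.mem_range.mp hi; omega
    push_cast [Nat.cast_sub this]
    ring
  push_cast at h1 ⊢
  rw [h1]
  have h2 : (j.factorial : ℝ) * ((j+k).descFactorial k : ℝ) = ((j+k).factorial : ℝ) := by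
    rw [← Nat.cast_mul]
    have : j.factorial = (j + k - k).factorial := by norm_num
    rw [this, Nat.factorial_mul_descFactorial (by omega : k ≤ j + k)]
  rw [div_eq_div_iff (by positivity) (by positivity), one_mul, mul_comm, h2]

lemma gk_zero (k m : ℕ) (h : m < k) : gk k m = 0 := by
  unfold gk
  rw [Finset.prod_eq_zero (Finset.mem_range.mpr h) (by simp)]
  simp

lemma summable_gk (k : ℕ) : Summable (gk k) := by
  rw [← summable_nat_add_iff k]
  simp only [gk_shift]
  simpa using Real.summable_pow_div_factorial 1

lemma tsum_one_div_factorial : ∑' j : ℕ, (1:ℝ) / j.factorial = Real.exp 1 := by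
  rw [Real.exp_eq_exp_ℝ, NormedSpace.exp_eq_tsum_div]
  simp

lemma tsum_gk (k : ℕ) : ∑' m, gk k m = Real.exp 1 := by
  have h := Summable.sum_add_tsum_nat_add k (summable_gk k)
  rw [Finset.sum_eq_zero (fun m hm => gk_zero k m (Finset.mem_range.mp hm)), zero_add] at h
  rw [← h]
  simp only [gk_shift]
  exact tsum_one_div_factorial

lemma summable_dobinski (r n : ℕ) : Summable (fun m : ℕ => ((m:ℝ) + r) ^ n / m.factorial) := by
  have : (fun m : ℕ => ((m:ℝ) + r) ^ n / m.factorial)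
      = fun m => ∑ k ∈ Finset.range (n+1), (rS r n k : ℝ) * gk k m := by
    funext m
    rw [rS_poly r n m, Finset.sum_div]
    exact Finset.sum_congr rfl fun k _ => by unfold gk; ring
  rw [this]
  exact summable_sum fun k _ => (summable_gk k).mul_left _

lemma dobinski (r n : ℕ) :
    ∑' m : ℕ, ((m:ℝ) + r) ^ n / m.factorial = Real.exp 1 * rBell r n := by
  have h : ∀ m : ℕ, ((m:ℝ) + r) ^ n / m.factorial
      = ∑ k ∈ Finset.range (n+1), (rS r n k : ℝ) * gk k m := by
    intro m
    rw [rS_poly r n m, Finset.sum_div]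
    exact Finset.sum_congr rfl fun k _ => by unfold gk; ring
  simp only [h]
  rw [Summable.tsum_finsetSum fun k _ => (summable_gk k).mul_left _]
  simp only [tsum_mul_left, tsum_gk]
  rw [rBell]
  push_cast
  rw [Finset.mul_sum]
  exact Finset.sum_congr rfl fun k _ => by ring



lemma integral_cos_mul_pi (c : ℝ) (hc : c ≠ 0) :
    ∫ θ in (0:ℝ)..π, Real.cos (c * θ) = Real.sin (c * π) / c := by
  rw [intervalIntegral.integral_comp_mul_left Real.cos hc]
  simp [integral_cos, div_eq_inv_mul]

lemma sin_orth (m n : ℕ) (hn : 1 ≤ n) :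
    ∫ θ in (0:ℝ)..π, Real.sin (m * θ) * Real.sin (n * θ)
      = if m = n then π / 2 else 0 := by
  have hprod : ∀ θ : ℝ, Real.sin (m * θ) * Real.sin (n * θ)
      = (Real.cos (((m:ℝ) - n) * θ) - Real.cos (((m:ℝ) + n) * θ)) / 2 := by
    intro θ
    have := Real.cos_sub_cos (((m:ℝ) - n) * θ) (((m:ℝ) + n) * θ)
    have h1 : (((m:ℝ) - n) * θ + ((m:ℝ) + n) * θ) / 2 = m * θ := by ring
    have h2 : (((m:ℝ) - n) * θ - ((m:ℝ) + n) * θ) / 2 = -(n * θ) := by ring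
    rw [h1, h2, Real.sin_neg] at this
    linarith
  rw [intervalIntegral.integral_congr (fun θ _ => hprod θ)]
  have hint : ∀ c : ℝ, IntervalIntegrable (fun θ => Real.cos (c * θ)) MeasureTheory.volume 0 π :=
    fun c => (Real.continuous_cos.comp (continuous_const.mul continuous_id)).intervalIntegrable 0 π
  simp only [sub_div]
  rw [intervalIntegral.integral_sub ((hint _).div_const 2) ((hint _).div_const 2),
    intervalIntegral.integral_div, intervalIntegral.integral_div]
  have hmn : ((m:ℝ) + n) ≠ 0 := by positivity
  rw [integral_cos_mul_pi _ hmn]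
  have hsin : ∀ k : ℤ, Real.sin ((k:ℝ) * π) = 0 := fun k => Real.sin_int_mul_pi k
  have h2 : Real.sin (((m:ℝ) + n) * π) = 0 := by
    have := hsin ((m:ℤ) + n); push_cast at this ⊢; convert this using 2
  by_cases h : m = n
  · subst h
    have : ((m:ℝ) - m) = 0 := by ring
    rw [if_pos rfl, this]
    simp only [zero_mul, Real.cos_zero]
    rw [integral_one, h2]
    ring
  · rw [if_neg h]
    have hmn' : ((m:ℝ) - n) ≠ 0 := by
      intro hh
      apply h
      have : (m:ℝ) = n := by linarith
      exact_mod_cast this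
    rw [integral_cos_mul_pi _ hmn']
    have h1 : Real.sin (((m:ℝ) - n) * π) = 0 := by
      have := hsin ((m:ℤ) - n); push_cast at this ⊢; convert this using 2
    rw [h1, h2]
    ring



lemma swap_tsum_integral (f : ℕ → ℝ → ℂ) (hc : ∀ m, Continuous (f m)) (bound : ℕ → ℝ)
    (hb : ∀ m θ, θ ∈ Set.Ioc (0:ℝ) π → ‖f m θ‖ ≤ bound m) (hs : Summable bound) :
    (∫ θ in (0:ℝ)..π, ∑' m, f m θ) = ∑' m, ∫ θ in (0:ℝ)..π, f m θ
      ∧ Summable (fun m => ∫ θ in (0:ℝ)..π, f m θ) := by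
  have hInt : ∀ m, IntegrableOn (f m) (Set.Ioc 0 π) volume := fun m =>
    (hc m).integrableOn_Ioc
  have hnormInt : ∀ m, ∫ θ in Set.Ioc (0:ℝ) π, ‖f m θ‖ ≤ π * bound m := by
    intro m
    have h1 : ∫ θ in Set.Ioc (0:ℝ) π, ‖f m θ‖ ≤ ∫ _θ in Set.Ioc (0:ℝ) π, bound m := by
      refine setIntegral_mono_on ((hc m).norm.integrableOn_Ioc) ((integrableOn_const_iff).mpr ?_)
        measurableSet_Ioc (fun θ hθ => hb m θ hθ)
      right; rw [Real.volume_Ioc]; exact ENNReal.ofReal_lt_top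
    rw [setIntegral_const, measureReal_def, Real.volume_Ioc, smul_eq_mul] at h1
    calc _ ≤ _ := h1
    _ ≤ π * bound m := by
      rw [ENNReal.toReal_ofReal (by rw [sub_zero]; exact Real.pi_pos.le)]
      have hbnn : 0 ≤ bound m := le_trans (norm_nonneg _) (hb m π ⟨Real.pi_pos, le_refl _⟩)
      nlinarith [Real.pi_pos]
  have hSumNorm : Summable fun m => ∫ θ in Set.Ioc (0:ℝ) π, ‖f m θ‖ :=
    Summable.of_nonneg_of_le (fun m => integral_nonneg fun θ => norm_nonneg _)
      hnormInt (hs.mul_left π)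
  have key := integral_tsum_of_summable_integral_norm hInt hSumNorm
  constructor
  · rw [intervalIntegral.integral_of_le Real.pi_pos.le, ← key]
    exact tsum_congr fun m => (intervalIntegral.integral_of_le Real.pi_pos.le).symm
  · apply Summable.of_norm
    refine Summable.of_nonneg_of_le (fun m => norm_nonneg _) (fun m => ?_) hSumNorm
    rw [intervalIntegral.integral_of_le Real.pi_pos.le]
    exact norm_integral_le_integral_norm _

lemma intervalIntegral_im (f : ℝ → ℂ) {a b : ℝ} (hf : IntervalIntegrable f volume a b) :
    (∫ x in a..b, f x).im = ∫ x in a..b, (f x).im := by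
  rw [intervalIntegral.intervalIntegral_eq_integral_uIoc,
    intervalIntegral.intervalIntegral_eq_integral_uIoc]
  rcases le_or_gt a b with h | h
  · simp only [if_pos h, one_smul]
    simpa using (integral_im hf.def').symm
  · simp only [if_neg (not_le.mpr h), neg_smul, one_smul, Complex.neg_im, neg_inj]
    rw [Set.uIoc_comm]
    simpa using (integral_im hf.symm.def').symm




lemma exp_tsum' (w : ℂ) : Complex.exp w = ∑' m : ℕ, w ^ m / m.factorial := by
  rw [Complex.exp_eq_exp_ℂ, NormedSpace.exp_eq_tsum_div]

lemma exp_circle_tsum (j : ℕ) (θ : ℝ) :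
    Complex.exp ((j:ℂ) * Complex.exp (θ * I))
      = ∑' m : ℕ, (((j:ℝ) ^ m / m.factorial : ℝ) : ℂ) * Complex.exp (((m : ℝ) * θ : ℝ) * I) := by
  rw [exp_tsum']
  refine tsum_congr fun m => ?_
  rw [mul_pow, ← Complex.exp_nat_mul]
  have : ((m:ℂ) * (θ * I)) = (((m:ℝ) * θ : ℝ) : ℂ) * I := by push_cast; ring
  rw [this]
  push_cast
  ring

lemma inner_integral (j n : ℕ) (hn : 1 ≤ n) :
    (∫ θ in (0:ℝ)..π, Complex.exp ((j:ℂ) * Complex.exp (θ * I)) * (Real.sin (n * θ) : ℂ)).im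
      = π / 2 * j ^ n / n.factorial := by
  set f : ℕ → ℝ → ℂ := fun m θ =>
    (((j:ℝ) ^ m / m.factorial : ℝ) : ℂ) * Complex.exp (((m : ℝ) * θ : ℝ) * I)
      * (Real.sin (n * θ) : ℂ) with hf
  have hfc : ∀ m, Continuous (f m) := by
    intro m
    apply Continuous.mul
    · exact continuous_const.mul (Complex.continuous_exp.comp
        (Continuous.mul (Complex.continuous_ofReal.comp (continuous_const.mul continuous_id))
          continuous_const))
    · exact Complex.continuous_ofReal.comp (Real.continuous_sin.comp
        (continuous_const.mul continuous_id))
  have hbd : ∀ m θ, θ ∈ Set.Ioc (0:ℝ) π → ‖f m θ‖ ≤ (j:ℝ) ^ m / m.factorial := by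
    intro m θ _
    rw [hf]
    simp only [norm_mul, Complex.norm_real, Real.norm_eq_abs, Complex.norm_exp_ofReal_mul_I,
      mul_one]
    have h1 : |(j:ℝ) ^ m / m.factorial| = (j:ℝ) ^ m / m.factorial := abs_of_nonneg (by positivity)
    rw [h1]
    have h2 : |Real.sin (n * θ)| ≤ 1 := Real.abs_sin_le_one _
    nlinarith [abs_nonneg (Real.sin (n * θ)), pow_nonneg (Nat.cast_nonneg j : (0:ℝ) ≤ j) m,
      div_nonneg (pow_nonneg (Nat.cast_nonneg j : (0:ℝ) ≤ j) m)
        (Nat.cast_nonneg m.factorial : (0:ℝ) ≤ m.factorial)]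
  obtain ⟨hswap, hsummable⟩ := swap_tsum_integral f hfc _ hbd (Real.summable_pow_div_factorial j)
  have hpt : ∀ θ : ℝ, Complex.exp ((j:ℂ) * Complex.exp (θ * I)) * (Real.sin (n * θ) : ℂ)
      = ∑' m, f m θ := by
    intro θ
    rw [exp_circle_tsum, ← tsum_mul_right]
  rw [intervalIntegral.integral_congr (fun θ _ => hpt θ), hswap]
  have hmap : (∑' m, ∫ θ in (0:ℝ)..π, f m θ).im = ∑' m, (∫ θ in (0:ℝ)..π, f m θ).im :=
    Complex.imCLM.map_tsum hsummable
  rw [hmap]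
  have him : ∀ m, (∫ θ in (0:ℝ)..π, f m θ).im
      = ((j:ℝ) ^ m / m.factorial) * (if m = n then π / 2 else 0) := by
    intro m
    rw [intervalIntegral_im (f m) ((hfc m).intervalIntegrable 0 π)]
    have himf : ∀ θ : ℝ, (f m θ).im
        = ((j:ℝ) ^ m / m.factorial) * (Real.sin (m * θ) * Real.sin (n * θ)) := by
      intro θ
      rw [hf]
      simp only [Complex.mul_im, Complex.mul_re, Complex.ofReal_re, Complex.ofReal_im,
        Complex.exp_ofReal_mul_I_re, Complex.exp_ofReal_mul_I_im]
      ring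
    rw [intervalIntegral.integral_congr (fun θ _ => himf θ),
      intervalIntegral.integral_const_mul, sin_orth m n hn]
  rw [tsum_congr him, tsum_eq_single n (fun m hm => by rw [if_neg hm, mul_zero])]
  rw [if_pos rfl]
  ring




open Complex in
theorem rBell_integral (n r : ℕ) (hn : 1 ≤ n) :
    (rBell r n : ℝ) =
      (2 * n.factorial) / (Real.pi * Real.exp 1) *
        (∫ θ in (0:ℝ)..Real.pi,
            Complex.exp (Complex.exp (Complex.exp (θ * I))) *
              Complex.exp ((r : ℂ) * Complex.exp (θ * I)) *
              (Real.sin (n * θ) : ℂ)).im := by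
  set F : ℕ → ℝ → ℂ := fun k θ =>
    (((1:ℝ)/k.factorial : ℝ) : ℂ) *
      (Complex.exp (((k + r : ℕ):ℂ) * Complex.exp (θ * I)) * (Real.sin (n * θ) : ℂ)) with hF
  have hfc : ∀ k, Continuous (F k) := by
    intro k
    apply continuous_const.mul
    apply Continuous.mul
    · exact Complex.continuous_exp.comp (continuous_const.mul (Complex.continuous_exp.comp
        ((Complex.continuous_ofReal).mul continuous_const)))
    · exact Complex.continuous_ofReal.comp (Real.continuous_sin.comp
        (continuous_const.mul continuous_id))
  have hbd : ∀ k θ, θ ∈ Set.Ioc (0:ℝ) π → ‖F k θ‖ ≤ Real.exp ((k:ℝ) + r) / k.factorial := by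
    intro k θ _
    rw [hF]
    simp only [norm_mul, Complex.norm_real, Real.norm_eq_abs, Complex.norm_exp]
    have hre : (((k + r : ℕ):ℂ) * Complex.exp ((θ:ℝ) * I)).re = ((k + r : ℕ):ℝ) * Real.cos θ := by
      simp [Complex.mul_re, Complex.exp_ofReal_mul_I_re, Complex.exp_ofReal_mul_I_im]
    rw [hre]
    have h1 : |(1:ℝ)/k.factorial| = 1/k.factorial := abs_of_nonneg (by positivity)
    have h2 : |Real.sin (n * θ)| ≤ 1 := Real.abs_sin_le_one _
    have h3 : Real.exp (((k + r:ℕ):ℝ) * Real.cos θ) ≤ Real.exp ((k:ℝ) + r) := by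
      apply Real.exp_le_exp.mpr
      have hc := Real.cos_le_one θ
      have : ((k + r:ℕ):ℝ) = (k:ℝ) + r := by push_cast; ring
      rw [this]
      nlinarith [Real.neg_one_le_cos θ, (by positivity : (0:ℝ) ≤ (k:ℝ) + r)]
    rw [h1]
    have hkf : (0:ℝ) < k.factorial := by positivity
    have hexp : (0:ℝ) < Real.exp (((k + r:ℕ):ℝ) * Real.cos θ) := Real.exp_pos _
    calc 1/(k.factorial:ℝ) * (Real.exp (((k + r:ℕ):ℝ) * Real.cos θ) * |Real.sin (n * θ)|)
        ≤ 1/(k.factorial:ℝ) * Real.exp ((k:ℝ) + r) := by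
          apply mul_le_mul_of_nonneg_left _ (by positivity)
          nlinarith [mul_le_mul_of_nonneg_left h2 hexp.le]
      _ = Real.exp ((k:ℝ) + r) / k.factorial := by ring
  have hs : Summable (fun k : ℕ => Real.exp ((k:ℝ) + r) / k.factorial) := by
    have : (fun k : ℕ => Real.exp ((k:ℝ) + r) / k.factorial)
        = fun k : ℕ => Real.exp r * ((Real.exp 1) ^ k / k.factorial) := by
      funext k
      rw [Real.exp_add, ← Real.exp_one_rpow (k:ℝ), Real.rpow_natCast]
      ring
    rw [this]
    exact (Real.summable_pow_div_factorial (Real.exp 1)).mul_left _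
  obtain ⟨hswap, hsummable⟩ := swap_tsum_integral F hfc _ hbd hs
  have hpt : ∀ θ : ℝ, Complex.exp (Complex.exp (Complex.exp ((θ:ℝ) * I))) *
      Complex.exp ((r : ℂ) * Complex.exp ((θ:ℝ) * I)) * (Real.sin (n * θ) : ℂ)
      = ∑' k, F k θ := by
    intro θ
    rw [exp_tsum' (Complex.exp (Complex.exp ((θ:ℝ) * I))), ← tsum_mul_right, ← tsum_mul_right]
    refine tsum_congr fun k => ?_
    rw [hF]
    simp only
    have hee : (k:ℂ) * Complex.exp ((θ:ℝ) * I) + (r:ℂ) * Complex.exp ((θ:ℝ) * I)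
        = ((k + r : ℕ):ℂ) * Complex.exp ((θ:ℝ) * I) := by push_cast; ring
    rw [← Complex.exp_nat_mul, div_mul_eq_mul_div, ← Complex.exp_add, hee]
    push_cast
    ring
  rw [intervalIntegral.integral_congr (fun θ _ => hpt θ), hswap]
  have hmap : (∑' k, ∫ θ in (0:ℝ)..π, F k θ).im = ∑' k, (∫ θ in (0:ℝ)..π, F k θ).im :=
    Complex.imCLM.map_tsum hsummable
  rw [hmap]
  have him : ∀ k, (∫ θ in (0:ℝ)..π, F k θ).im
      = π / (2 * n.factorial) * (((k:ℝ) + r) ^ n / k.factorial) := by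
    intro k
    rw [hF]
    simp only
    rw [intervalIntegral.integral_const_mul]
    have : ((((1:ℝ)/k.factorial : ℝ) : ℂ) * ∫ θ in (0:ℝ)..π,
        Complex.exp (((k + r : ℕ):ℂ) * Complex.exp ((θ:ℝ) * I)) * (Real.sin (n * θ) : ℂ)).im
        = (1/k.factorial : ℝ) * (∫ θ in (0:ℝ)..π,
        Complex.exp (((k + r : ℕ):ℂ) * Complex.exp ((θ:ℝ) * I)) * (Real.sin (n * θ) : ℂ)).im := by
      simp [Complex.mul_im]
    rw [this, inner_integral (k + r) n hn]
    push_cast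
    ring
  rw [tsum_congr him, tsum_mul_left, dobinski r n]
  have hnf : ((n.factorial:ℝ)) ≠ 0 := by positivity
  have hpi : (π:ℝ) ≠ 0 := Real.pi_ne_zero
  have he : Real.exp 1 ≠ 0 := (Real.exp_pos 1).ne'
  field_simp
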